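/- Let B > 0 and c > 0 be real numbers, let (A_ν) be a family of nonnegative real numbers indexed by multi-indices ν, and let (Υ_j)_{j≥1} be a sequence of nonnegative real numbers. Suppose that A_0 = B and that for every multi-index ν ≠ 0 one has A_ν = ∑_{j≥1} ∑_{k=1}^{ν_j} binom(ν_j, k) c^k Υ_j A_{ν − k·e_j}. Then for every multi-index ν, A_ν = c^{|ν|} B ∑_{m ≤ ν} |m|! Υ^m ∏_{i≥1} S(ν_i, m_i). -/

import Mathlib

/-- Stirling numbers of the second kind, as real numbers:
`S(n,k) = (1/k!) ∑_{j=0}^{k} (−1)^{k−j} binom(k,j) j^n`. -/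
noncomputable def stirlingS2 (n k : ℕ) : ℝ :=
  (1 / (k.factorial : ℝ)) *
    ∑ j ∈ Finset.range (k + 1), (-1 : ℝ) ^ (k - j) * (k.choose j : ℝ) * (j : ℝ) ^ n

/-- The order `|ν| = ∑_j ν_j` of a multi-index `ν`. -/
def multiOrder (ν : ℕ →₀ ℕ) : ℕ := ν.sum fun _ k => k

/-- `Υ^m = ∏_{j : m_j ≠ 0} Υ_j^{m_j}`. -/
noncomputable def multiPow (Υ : ℕ → ℝ) (m : ℕ →₀ ℕ) : ℝ := m.prod fun j k => Υ j ^ k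

open Finset

noncomputable def Tsum (n k : ℕ) : ℝ :=
  ∑ j ∈ Finset.range (k + 1), (-1 : ℝ) ^ (k - j) * (k.choose j : ℝ) * (j : ℝ) ^ n

lemma stirlingS2_eq (n k : ℕ) : stirlingS2 n k = Tsum n k / k.factorial := by
  rw [stirlingS2, Tsum]; ring

lemma neg_one_pow_sub (k j : ℕ) (h : j ≤ k) : (-1:ℝ)^(k-j) = (-1:ℝ)^k * (-1:ℝ)^j := by
  have h1 : (-1:ℝ)^(k-j) * (-1:ℝ)^j = (-1:ℝ)^k := by
    rw [← pow_add, Nat.sub_add_cancel h]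
  have h2 : (-1:ℝ)^j * (-1:ℝ)^j = 1 := by
    rw [← pow_add]; exact Even.neg_one_pow ⟨j, rfl⟩
  calc (-1:ℝ)^(k-j) = (-1:ℝ)^(k-j) * ((-1:ℝ)^j * (-1:ℝ)^j) := by rw [h2, mul_one]
    _ = ((-1:ℝ)^(k-j) * (-1:ℝ)^j) * (-1:ℝ)^j := by ring
    _ = (-1:ℝ)^k * (-1:ℝ)^j := by rw [h1]

lemma Tsum_eq_zero : ∀ n k, n < k → Tsum n k = 0 := by
  intro n
  induction n using Nat.strong_induction_on with
  | _ n ih =>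
    intro k hk
    cases n with
    | zero =>
      have hk0 : k ≠ 0 := by omega
      have h4 : (∑ j ∈ range (k+1), (-1:ℝ)^j * (k.choose j : ℝ)) = 0 := by
        have h5 := Int.alternating_sum_range_choose_of_ne hk0
        have h6 := congrArg (fun z : ℤ => (z : ℝ)) h5
        push_cast at h6
        exact h6
      have : Tsum 0 k = (-1:ℝ)^k * ∑ j ∈ range (k+1), (-1:ℝ)^j * (k.choose j : ℝ) := by
        rw [Tsum, Finset.mul_sum]
        refine Finset.sum_congr rfl fun j hj => ?_
        have hj' : j ≤ k := Nat.lt_succ_iff.mp (Finset.mem_range.mp hj)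
        rw [pow_zero, mul_one, neg_one_pow_sub k j hj']
        ring
      rw [this, h4, mul_zero]
    | succ n =>
      obtain ⟨K, rfl⟩ : ∃ K, k = K + 1 := ⟨k - 1, by omega⟩
      have hK : n + 1 ≤ K := by omega
      have step : Tsum (n+1) (K+1)
          = ∑ i ∈ range (K+1), ∑ s ∈ range (n+1),
              (K+1 : ℝ) * (n.choose s : ℝ) * ((-1:ℝ)^(K-i) * (K.choose i : ℝ) * (i:ℝ)^s) := by
        rw [Tsum, Finset.sum_range_succ']
        have h0 : (-1:ℝ)^(K+1-0) * ((K+1).choose 0 : ℝ) * ((0:ℕ):ℝ)^(n+1) = 0 := by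
          simp
        rw [h0, add_zero]
        refine Finset.sum_congr rfl fun i hi => ?_
        have hchoose : ((K+1).choose (i+1) : ℝ) * (i+1 : ℝ) = (K+1 : ℝ) * (K.choose i : ℝ) := by
          have := Nat.add_one_mul_choose_eq K i
          have h7 := congrArg (fun z : ℕ => (z : ℝ)) this
          push_cast at h7
          linarith [h7]
        have hpow : ((i:ℝ)+1)^n = ∑ s ∈ range (n+1), (i:ℝ)^s * (n.choose s : ℝ) := by
          have := add_pow (i:ℝ) 1 n
          simpa using this
        have hsub : K + 1 - (i+1) = K - i := by omega
        rw [hsub]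
        push_cast
        rw [show ((i:ℝ)+1)^(n+1) = ((i:ℝ)+1) * ((i:ℝ)+1)^n from by ring, hpow,
          Finset.mul_sum, Finset.mul_sum]
        refine Finset.sum_congr rfl fun s hs => ?_
        have : (-1:ℝ)^(K-i) * ((K+1).choose (i+1) : ℝ) * (((i:ℝ)+1) * ((i:ℝ)^s * (n.choose s : ℝ)))
            = (-1:ℝ)^(K-i) * (((K+1).choose (i+1) : ℝ) * ((i:ℝ)+1)) * ((i:ℝ)^s * (n.choose s : ℝ)) := by ring
        rw [this, hchoose]
        ring
      rw [step, Finset.sum_comm]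
      refine Finset.sum_eq_zero fun s hs => ?_
      have hs' : s < K := by
        have := Finset.mem_range.mp hs; omega
      have hT : Tsum s K = 0 := ih s (Finset.mem_range.mp hs) K hs'
      rw [Tsum] at hT
      calc ∑ i ∈ range (K+1), (K+1:ℝ) * (n.choose s : ℝ) * ((-1:ℝ)^(K-i) * (K.choose i : ℝ) * (i:ℝ)^s)
          = (K+1:ℝ) * (n.choose s : ℝ) * ∑ i ∈ range (K+1), ((-1:ℝ)^(K-i) * (K.choose i : ℝ) * (i:ℝ)^s) := by
            rw [Finset.mul_sum]
        _ = 0 := by rw [hT, mul_zero]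

lemma stirlingS2_eq_zero {n k : ℕ} (h : n < k) : stirlingS2 n k = 0 := by
  rw [stirlingS2_eq, Tsum_eq_zero n k h, zero_div]

lemma stirlingS2_zero_zero : stirlingS2 0 0 = 1 := by simp [stirlingS2]

lemma stirlingS2_zero_right {n : ℕ} (h : 1 ≤ n) : stirlingS2 n 0 = 0 := by
  simp [stirlingS2, zero_pow (by omega : n ≠ 0)]
lemma Tsum_key (n t : ℕ) (hn : 1 ≤ n) :
    ∑ k ∈ Finset.Icc 1 n, (n.choose k : ℝ) * Tsum (n-k) t = Tsum n (t+1) := by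
  -- LHS = ∑_j (-1)^(t-j) C(t,j) ((j+1)^n - j^n)
  have hinner : ∀ j : ℕ, ∑ k ∈ Finset.Icc 1 n, (n.choose k : ℝ) * (j:ℝ)^(n-k)
      = ((j:ℝ)+1)^n - (j:ℝ)^n := by
    intro j
    have hIcc : ∑ k ∈ Finset.Icc 1 n, (n.choose k : ℝ) * (j:ℝ)^(n-k)
        = ∑ k ∈ range n, (n.choose (k+1) : ℝ) * (j:ℝ)^(n-(k+1)) := by
      rw [show Finset.Icc 1 n = Finset.Ico 1 (n+1) from rfl]
      rw [Finset.sum_Ico_eq_sum_range]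
      simp [add_comm]
    have hfull : ∑ k ∈ range (n+1), (n.choose k : ℝ) * (j:ℝ)^(n-k) = ((j:ℝ)+1)^n := by
      have := add_pow (1:ℝ) (j:ℝ) n
      simp only [one_pow, one_mul] at this
      rw [add_comm (1:ℝ) (j:ℝ)] at this
      rw [this]
      exact Finset.sum_congr rfl fun k _ => by ring
    have hsplit := Finset.sum_range_succ' (fun k => (n.choose k : ℝ) * (j:ℝ)^(n-k)) n
    rw [hsplit] at hfull
    simp only [Nat.choose_zero_right, Nat.cast_one, one_mul, Nat.sub_zero] at hfull
    rw [hIcc]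
    linarith [hfull]
  have lhs_eq : ∑ k ∈ Finset.Icc 1 n, (n.choose k : ℝ) * Tsum (n-k) t
      = ∑ j ∈ range (t+1), (-1:ℝ)^(t-j) * (t.choose j : ℝ) * (((j:ℝ)+1)^n - (j:ℝ)^n) := by
    simp only [Tsum, Finset.mul_sum]
    rw [Finset.sum_comm]
    refine Finset.sum_congr rfl fun j hj => ?_
    rw [← hinner j, Finset.mul_sum]
    exact Finset.sum_congr rfl fun k _ => by ring
  rw [lhs_eq]
  -- RHS: peel j = 0 and use Pascal
  have rhs_eq : Tsum n (t+1)
      = ∑ i ∈ range (t+1), (-1:ℝ)^(t-i) * ((t.choose i : ℝ) + (t.choose (i+1) : ℝ)) * ((i:ℝ)+1)^n := by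
    rw [Tsum, Finset.sum_range_succ']
    have h0 : (-1:ℝ)^(t+1-0) * ((t+1).choose 0 : ℝ) * ((0:ℕ):ℝ)^n = 0 := by
      simp [zero_pow (by omega : n ≠ 0)]
    rw [h0, add_zero]
    refine Finset.sum_congr rfl fun i hi => ?_
    have hsub : t + 1 - (i+1) = t - i := by omega
    have hp : ((t+1).choose (i+1) : ℝ) = (t.choose i : ℝ) + (t.choose (i+1) : ℝ) := by
      rw [Nat.choose_succ_succ]
      push_cast; ring
    rw [hsub, hp]
    push_cast; ring
  rw [rhs_eq]
  -- expand both sides and match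
  have expand : ∀ i ∈ range (t+1),
      (-1:ℝ)^(t-i) * ((t.choose i : ℝ) + (t.choose (i+1) : ℝ)) * ((i:ℝ)+1)^n
      = (-1:ℝ)^(t-i) * (t.choose i : ℝ) * ((i:ℝ)+1)^n
        + (-1:ℝ)^(t-i) * (t.choose (i+1) : ℝ) * ((i:ℝ)+1)^n := fun i _ => by ring
  rw [Finset.sum_congr rfl expand, Finset.sum_add_distrib]
  have expand2 : ∀ j ∈ range (t+1),
      (-1:ℝ)^(t-j) * (t.choose j : ℝ) * (((j:ℝ)+1)^n - (j:ℝ)^n)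
      = (-1:ℝ)^(t-j) * (t.choose j : ℝ) * ((j:ℝ)+1)^n
        - (-1:ℝ)^(t-j) * (t.choose j : ℝ) * (j:ℝ)^n := fun j _ => by ring
  rw [Finset.sum_congr rfl expand2, Finset.sum_sub_distrib]
  have claim : ∑ x ∈ range (t+1), (-1:ℝ)^(t-x) * (t.choose (x+1) : ℝ) * ((x:ℝ)+1)^n
      = - ∑ x ∈ range (t+1), (-1:ℝ)^(t-x) * (t.choose x : ℝ) * (x:ℝ)^n := by
    rw [Finset.sum_range_succ, Nat.choose_succ_self, Finset.sum_range_succ']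
    simp only [Nat.cast_zero, Nat.cast_ofNat, zero_pow (by omega : n ≠ 0), mul_zero, add_zero,
      Nat.cast_zero]
    rw [zero_mul, add_zero, ← Finset.sum_neg_distrib]
    refine Finset.sum_congr rfl fun i hi => ?_
    have hi' : i < t := Finset.mem_range.mp hi
    have hsub : t - i = (t - (i+1)) + 1 := by omega
    rw [hsub, pow_succ]
    push_cast
    ring
  linarith [claim]

lemma stirling_key (n t : ℕ) (hn : 1 ≤ n) :
    ∑ k ∈ Finset.Icc 1 n, (n.choose k : ℝ) * stirlingS2 (n - k) t
      = ((t:ℝ) + 1) * stirlingS2 n (t + 1) := by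
  have hL : ∑ k ∈ Finset.Icc 1 n, (n.choose k : ℝ) * stirlingS2 (n - k) t
      = (∑ k ∈ Finset.Icc 1 n, (n.choose k : ℝ) * Tsum (n-k) t) / (t.factorial : ℝ) := by
    rw [Finset.sum_div]
    exact Finset.sum_congr rfl fun k _ => by rw [stirlingS2_eq]; ring
  rw [hL, Tsum_key n t hn, stirlingS2_eq n (t+1)]
  have h1 : ((t+1).factorial : ℝ) = ((t:ℝ)+1) * (t.factorial : ℝ) := by
    rw [Nat.factorial_succ]; push_cast; ring
  rw [h1]
  have h2 : (t.factorial : ℝ) ≠ 0 := Nat.cast_ne_zero.mpr t.factorial_ne_zero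
  have h3 : ((t:ℝ)+1) ≠ 0 := by positivity
  field_simp


lemma multiOrder_add (a b : ℕ →₀ ℕ) : multiOrder (a + b) = multiOrder a + multiOrder b :=
  Finsupp.sum_add_index' (fun _ => rfl) (fun _ _ _ => rfl)

lemma multiOrder_single (j k : ℕ) : multiOrder (Finsupp.single j k) = k :=
  Finsupp.sum_single_index rfl

lemma multiOrder_eq_sum (m : ℕ →₀ ℕ) {s : Finset ℕ} (hs : m.support ⊆ s) :
    multiOrder m = ∑ j ∈ s, m j := by
  rw [multiOrder, Finsupp.sum]
  exact Finset.sum_subset hs fun i _ hi => Finsupp.notMem_support_iff.mp hi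

lemma multiOrder_eq_zero {m : ℕ →₀ ℕ} (h : multiOrder m = 0) : m = 0 := by
  rw [multiOrder, Finsupp.sum] at h
  ext i
  simp only [Finsupp.coe_zero, Pi.zero_apply]
  by_contra hi
  exact hi ((Finset.sum_eq_zero_iff.mp h) i (Finsupp.mem_support_iff.mpr hi))

lemma apply_le_multiOrder (ν : ℕ →₀ ℕ) (j : ℕ) : ν j ≤ multiOrder ν := by
  by_cases hj : j ∈ ν.support
  · rw [multiOrder_eq_sum ν (subset_refl _)]
    exact Finset.single_le_sum (fun i _ => Nat.zero_le _) hj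
  · simp [Finsupp.notMem_support_iff.mp hj]

lemma multiOrder_sub_single {ν : ℕ →₀ ℕ} {j k : ℕ} (h : k ≤ ν j) :
    multiOrder (ν - Finsupp.single j k) + k = multiOrder ν := by
  have hle : Finsupp.single j k ≤ ν := Finsupp.single_le_iff.mpr h
  conv_rhs => rw [← tsub_add_cancel_of_le hle]
  rw [multiOrder_add, multiOrder_single]

lemma multiPow_zero (Υ : ℕ → ℝ) : multiPow Υ 0 = 1 := rfl

lemma multiPow_add (Υ : ℕ → ℝ) (a b : ℕ →₀ ℕ) :
    multiPow Υ (a + b) = multiPow Υ a * multiPow Υ b :=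
  Finsupp.prod_add_index' (fun a => pow_zero _) (fun a b₁ b₂ => pow_add _ _ _)

lemma multiPow_single (Υ : ℕ → ℝ) (j k : ℕ) :
    multiPow Υ (Finsupp.single j k) = Υ j ^ k :=
  Finsupp.prod_single_index (pow_zero _)

lemma prod_stirling_subset {ν m : ℕ →₀ ℕ} (hm : m ≤ ν) {s : Finset ℕ} (hs : ν.support ⊆ s) :
    ∏ i ∈ s, stirlingS2 (ν i) (m i) = ∏ i ∈ ν.support, stirlingS2 (ν i) (m i) := by
  refine (Finset.prod_subset hs fun i _ hi => ?_).symm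
  have h1 : ν i = 0 := Finsupp.notMem_support_iff.mp hi
  have h2 : m i = 0 := by have := Finsupp.le_def.mp hm i; omega
  rw [h1, h2, stirlingS2_zero_zero]

lemma Iic_zero : Finset.Iic (0 : ℕ →₀ ℕ) = {0} := by
  ext m
  simp [Finset.mem_Iic, le_zero_iff]

theorem stmt_1 (B c : ℝ) (hB : 0 < B) (hc : 0 < c)
    (A : (ℕ →₀ ℕ) → ℝ) (hA : ∀ ν, 0 ≤ A ν)
    (Υ : ℕ → ℝ) (hΥ : ∀ j, 0 ≤ Υ j)
    (h0 : A 0 = B)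
    (hrec : ∀ ν : ℕ →₀ ℕ, ν ≠ 0 →
      A ν = ∑ j ∈ ν.support, ∑ k ∈ Finset.Icc 1 (ν j),
        ((ν j).choose k : ℝ) * c ^ k * Υ j * A (ν - Finsupp.single j k)) :
    ∀ ν : ℕ →₀ ℕ,
      A ν = c ^ multiOrder ν * B *
        ∑ m ∈ Finset.Iic ν,
          ((multiOrder m).factorial : ℝ) * multiPow Υ m *
            ∏ i ∈ ν.support, stirlingS2 (ν i) (m i) := by
  suffices H : ∀ n (ν : ℕ →₀ ℕ), multiOrder ν ≤ n → A ν = c ^ multiOrder ν * B *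
      ∑ m ∈ Finset.Iic ν, ((multiOrder m).factorial : ℝ) * multiPow Υ m *
          ∏ i ∈ ν.support, stirlingS2 (ν i) (m i) by
    exact fun ν => H (multiOrder ν) ν le_rfl
  have base : A 0 = c ^ multiOrder (0:ℕ→₀ℕ) * B *
      ∑ m ∈ Finset.Iic (0:ℕ→₀ℕ), ((multiOrder m).factorial : ℝ) * multiPow Υ m *
          ∏ i ∈ (0:ℕ→₀ℕ).support, stirlingS2 ((0:ℕ→₀ℕ) i) (m i) := by
    rw [h0, Iic_zero, Finset.sum_singleton]
    have h1 : multiOrder (0:ℕ→₀ℕ) = 0 := by simp [multiOrder]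
    rw [h1, multiPow_zero]
    simp
  intro n
  induction n with
  | zero =>
    intro ν hν
    have hz : ν = 0 := multiOrder_eq_zero (Nat.le_zero.mp hν)
    rw [hz]; exact base
  | succ n ih =>
    intro ν hν
    by_cases hν0 : ν = 0
    · rw [hν0]; exact base
    rw [hrec ν hν0]
    have hSne : ν.support.Nonempty := Finsupp.support_nonempty_iff.mpr hν0
    have step_j : ∀ j ∈ ν.support,
        ∑ k ∈ Finset.Icc 1 (ν j), ((ν j).choose k : ℝ) * c ^ k * Υ j * A (ν - Finsupp.single j k)
        = ∑ m ∈ Finset.Iic ν, c ^ multiOrder ν * B * Υ j * ((multiOrder m).factorial : ℝ)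
            * multiPow Υ m * (((m j : ℝ) + 1) * stirlingS2 (ν j) (m j + 1))
            * ∏ i ∈ ν.support.erase j, stirlingS2 (ν i) (m i) := by
      intro j hj
      have hνj : 1 ≤ ν j := Nat.one_le_iff_ne_zero.mpr (Finsupp.mem_support_iff.mp hj)
      have hk_term : ∀ k ∈ Finset.Icc 1 (ν j),
          ((ν j).choose k : ℝ) * c ^ k * Υ j * A (ν - Finsupp.single j k)
          = ∑ m ∈ Finset.Iic ν, c ^ multiOrder ν * B * Υ j * ((multiOrder m).factorial : ℝ)
              * multiPow Υ m * (((ν j).choose k : ℝ) * stirlingS2 (ν j - k) (m j))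
              * ∏ i ∈ ν.support.erase j, stirlingS2 (ν i) (m i) := by
        intro k hk
        obtain ⟨hk1, hk2⟩ := Finset.mem_Icc.mp hk
        have hμle : ν - Finsupp.single j k ≤ ν := tsub_le_self
        have hord : multiOrder (ν - Finsupp.single j k) + k = multiOrder ν :=
          multiOrder_sub_single hk2
        have hordle : multiOrder (ν - Finsupp.single j k) ≤ n := by omega
        have happj : (ν - Finsupp.single j k) j = ν j - k := by
          rw [Finsupp.tsub_apply, Finsupp.single_apply, if_pos rfl]
        have happ : ∀ i, i ≠ j → (ν - Finsupp.single j k) i = ν i := by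
          intro i hij
          rw [Finsupp.tsub_apply, Finsupp.single_apply, if_neg (fun h => hij h.symm), Nat.sub_zero]
        rw [ih _ hordle]
        have hsupp : (ν - Finsupp.single j k).support ⊆ ν.support := Finsupp.support_mono hμle
        have hprod : ∀ m ∈ Finset.Iic (ν - Finsupp.single j k),
            ((multiOrder m).factorial : ℝ) * multiPow Υ m
              * ∏ i ∈ (ν - Finsupp.single j k).support, stirlingS2 ((ν - Finsupp.single j k) i) (m i)
            = ((multiOrder m).factorial : ℝ) * multiPow Υ m
              * ∏ i ∈ ν.support, stirlingS2 ((ν - Finsupp.single j k) i) (m i) := by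
          intro m hm
          rw [prod_stirling_subset (Finset.mem_Iic.mp hm) hsupp]
        rw [Finset.sum_congr rfl hprod]
        rw [Finset.sum_subset (Finset.Iic_subset_Iic.mpr hμle) ?hext]
        case hext =>
          intro m hm hnm
          have hmν : m ≤ ν := Finset.mem_Iic.mp hm
          have hnle : ¬ m ≤ ν - Finsupp.single j k := fun h => hnm (Finset.mem_Iic.mpr h)
          have hjj : (ν - Finsupp.single j k) j < m j := by
            by_contra hcon
            push_neg at hcon
            refine hnle (Finsupp.le_def.mpr fun i => ?_)
            by_cases hij : i = j
            · subst hij; exact hcon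
            · rw [happ i hij]; exact Finsupp.le_def.mp hmν i
          have hzero : ∏ i ∈ ν.support, stirlingS2 ((ν - Finsupp.single j k) i) (m i) = 0 :=
            Finset.prod_eq_zero hj (stirlingS2_eq_zero hjj)
          rw [hzero, mul_zero]
        -- now rearrange the summand
        rw [Finset.mul_sum, Finset.mul_sum]
        refine Finset.sum_congr rfl fun m hm => ?_
        have hcc : c ^ k * c ^ multiOrder (ν - Finsupp.single j k) = c ^ multiOrder ν := by
          rw [← pow_add, Nat.add_comm, hord]
        have hps : ∏ i ∈ ν.support, stirlingS2 ((ν - Finsupp.single j k) i) (m i)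
            = stirlingS2 (ν j - k) (m j)
              * ∏ i ∈ ν.support.erase j, stirlingS2 (ν i) (m i) := by
          rw [← Finset.mul_prod_erase _ _ hj, happj]
          congr 1
          exact Finset.prod_congr rfl fun i hi => by
            rw [happ i (Finset.ne_of_mem_erase hi)]
        rw [hps, ← hcc]
        ring
      rw [Finset.sum_congr rfl hk_term, Finset.sum_comm]
      refine Finset.sum_congr rfl fun m hm => ?_
      calc ∑ k ∈ Finset.Icc 1 (ν j), c ^ multiOrder ν * B * Υ j * ((multiOrder m).factorial : ℝ)
              * multiPow Υ m * (((ν j).choose k : ℝ) * stirlingS2 (ν j - k) (m j))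
              * ∏ i ∈ ν.support.erase j, stirlingS2 (ν i) (m i)
          = (∑ k ∈ Finset.Icc 1 (ν j), ((ν j).choose k : ℝ) * stirlingS2 (ν j - k) (m j))
            * (c ^ multiOrder ν * B * Υ j * ((multiOrder m).factorial : ℝ) * multiPow Υ m
              * ∏ i ∈ ν.support.erase j, stirlingS2 (ν i) (m i)) := by
            rw [Finset.sum_mul]
            exact Finset.sum_congr rfl fun k _ => by ring
        _ = (((m j : ℝ) + 1) * stirlingS2 (ν j) (m j + 1))
            * (c ^ multiOrder ν * B * Υ j * ((multiOrder m).factorial : ℝ) * multiPow Υ m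
              * ∏ i ∈ ν.support.erase j, stirlingS2 (ν i) (m i)) := by
            rw [stirling_key (ν j) (m j) hνj]
        _ = c ^ multiOrder ν * B * Υ j * ((multiOrder m).factorial : ℝ)
              * multiPow Υ m * (((m j : ℝ) + 1) * stirlingS2 (ν j) (m j + 1))
              * ∏ i ∈ ν.support.erase j, stirlingS2 (ν i) (m i) := by ring
    have step2_j : ∀ j ∈ ν.support,
        ∑ m ∈ Finset.Iic ν, c ^ multiOrder ν * B * Υ j * ((multiOrder m).factorial : ℝ)
            * multiPow Υ m * (((m j : ℝ) + 1) * stirlingS2 (ν j) (m j + 1))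
            * ∏ i ∈ ν.support.erase j, stirlingS2 (ν i) (m i)
        = ∑ m ∈ Finset.Iic ν, c ^ multiOrder ν * B * (m j : ℝ)
            * (((multiOrder m - 1).factorial : ℝ)) * multiPow Υ m
            * ∏ i ∈ ν.support, stirlingS2 (ν i) (m i) := by
      intro j hj
      have hνj : 1 ≤ ν j := Nat.one_le_iff_ne_zero.mpr (Finsupp.mem_support_iff.mp hj)
      have hone : Finsupp.single j 1 ≤ ν := Finsupp.single_le_iff.mpr hνj
      have hμle : ν - Finsupp.single j 1 ≤ ν := tsub_le_self
      -- shrink the LHS to Iic (ν - e_j)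
      rw [← Finset.sum_subset (Finset.Iic_subset_Iic.mpr hμle) ?hshrink]
      case hshrink =>
        intro m hm hnm
        have hmν : m ≤ ν := Finset.mem_Iic.mp hm
        have hnle : ¬ m ≤ ν - Finsupp.single j 1 := fun h => hnm (Finset.mem_Iic.mpr h)
        have hjj : m j = ν j := by
          by_contra hcon
          have hlt : m j < ν j := lt_of_le_of_ne (Finsupp.le_def.mp hmν j) hcon
          refine hnle (Finsupp.le_def.mpr fun i => ?_)
          by_cases hij : i = j
          · subst hij
            rw [Finsupp.tsub_apply, Finsupp.single_apply, if_pos rfl]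
            omega
          · rw [Finsupp.tsub_apply, Finsupp.single_apply, if_neg (fun h => hij h.symm),
              Nat.sub_zero]
            exact Finsupp.le_def.mp hmν i
        have hz : stirlingS2 (ν j) (m j + 1) = 0 := stirlingS2_eq_zero (by omega)
        rw [hz]
        ring
      -- rewrite the RHS as a sum over the filter of m with m j ≠ 0
      have hfil : ∑ m ∈ Finset.Iic ν, c ^ multiOrder ν * B * (m j : ℝ)
            * (((multiOrder m - 1).factorial : ℝ)) * multiPow Υ m
            * ∏ i ∈ ν.support, stirlingS2 (ν i) (m i)
          = ∑ m ∈ (Finset.Iic ν).filter (fun m => m j ≠ 0), c ^ multiOrder ν * B * (m j : ℝ)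
            * (((multiOrder m - 1).factorial : ℝ)) * multiPow Υ m
            * ∏ i ∈ ν.support, stirlingS2 (ν i) (m i) := by
        refine (Finset.sum_filter_of_ne fun m hm hne => ?_).symm
        rcases Nat.eq_zero_or_pos (m j) with hz|hp
        · rw [hz] at hne; simp at hne
        · omega
      rw [hfil]
      -- bijection m ↦ m + e_j
      refine Finset.sum_nbij' (fun m => m + Finsupp.single j 1) (fun m => m - Finsupp.single j 1)
        ?_ ?_ ?_ ?_ ?_
      · intro m hm
        have hmμ : m ≤ ν - Finsupp.single j 1 := Finset.mem_Iic.mp hm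
        have h1 : m + Finsupp.single j 1 ≤ ν := by
          calc m + Finsupp.single j 1 ≤ (ν - Finsupp.single j 1) + Finsupp.single j 1 :=
              add_le_add hmμ le_rfl
            _ = ν := tsub_add_cancel_of_le hone
        refine Finset.mem_filter.mpr ⟨Finset.mem_Iic.mpr h1, ?_⟩
        simp [Finsupp.add_apply, Finsupp.single_apply]
      · intro m hm
        obtain ⟨hm1, hm2⟩ := Finset.mem_filter.mp hm
        exact Finset.mem_Iic.mpr (tsub_le_tsub_right (Finset.mem_Iic.mp hm1) _)
      · intro m hm
        exact add_tsub_cancel_right m _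
      · intro m hm
        obtain ⟨hm1, hm2⟩ := Finset.mem_filter.mp hm
        have : Finsupp.single j 1 ≤ m := Finsupp.single_le_iff.mpr (by omega)
        exact tsub_add_cancel_of_le this
      · intro m hm
        have happj : (m + Finsupp.single j 1 : ℕ →₀ ℕ) j = m j + 1 := by
          simp [Finsupp.add_apply, Finsupp.single_apply]
        have hord : multiOrder (m + Finsupp.single j 1) = multiOrder m + 1 := by
          rw [multiOrder_add, multiOrder_single]
        have hpow : multiPow Υ (m + Finsupp.single j 1) = multiPow Υ m * Υ j := by
          rw [multiPow_add, multiPow_single, pow_one]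
        have hps : ∏ i ∈ ν.support, stirlingS2 (ν i) ((m + Finsupp.single j 1 : ℕ →₀ ℕ) i)
            = stirlingS2 (ν j) (m j + 1)
              * ∏ i ∈ ν.support.erase j, stirlingS2 (ν i) (m i) := by
          rw [← Finset.mul_prod_erase _ _ hj, happj]
          congr 1
          refine Finset.prod_congr rfl fun i hi => ?_
          have hij : i ≠ j := Finset.ne_of_mem_erase hi
          rw [Finsupp.add_apply, Finsupp.single_apply, if_neg (fun h => hij h.symm), Nat.add_zero]
        rw [happj, hord, hpow, hps, Nat.add_sub_cancel]
        push_cast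
        ring
    rw [Finset.sum_congr rfl (fun j hj => (step_j j hj).trans (step2_j j hj)), Finset.sum_comm,
      Finset.mul_sum]
    refine Finset.sum_congr rfl fun m hm => ?_
    have hmν : m ≤ ν := Finset.mem_Iic.mp hm
    have hsum : ∑ j ∈ ν.support, (m j : ℝ) = (multiOrder m : ℝ) := by
      rw [multiOrder_eq_sum m (Finsupp.support_mono hmν)]
      push_cast
      rfl
    calc ∑ j ∈ ν.support, c ^ multiOrder ν * B * (m j : ℝ)
            * (((multiOrder m - 1).factorial : ℝ)) * multiPow Υ m
            * ∏ i ∈ ν.support, stirlingS2 (ν i) (m i)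
        = (∑ j ∈ ν.support, (m j : ℝ)) * (c ^ multiOrder ν * B
            * (((multiOrder m - 1).factorial : ℝ)) * multiPow Υ m
            * ∏ i ∈ ν.support, stirlingS2 (ν i) (m i)) := by
          rw [Finset.sum_mul]
          exact Finset.sum_congr rfl fun j _ => by ring
      _ = (multiOrder m : ℝ) * (c ^ multiOrder ν * B
            * (((multiOrder m - 1).factorial : ℝ)) * multiPow Υ m
            * ∏ i ∈ ν.support, stirlingS2 (ν i) (m i)) := by rw [hsum]
      _ = c ^ multiOrder ν * B * (((multiOrder m).factorial : ℝ) * multiPow Υ m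
            * ∏ i ∈ ν.support, stirlingS2 (ν i) (m i)) := by
          by_cases hm0 : multiOrder m = 0
          · have hmz : m = 0 := multiOrder_eq_zero hm0
            obtain ⟨i₀, hi₀⟩ := hSne
            have hz : ∏ i ∈ ν.support, stirlingS2 (ν i) (m i) = 0 := by
              refine Finset.prod_eq_zero hi₀ ?_
              have : m i₀ = 0 := by rw [hmz]; rfl
              rw [this]
              exact stirlingS2_zero_right
                (Nat.one_le_iff_ne_zero.mpr (Finsupp.mem_support_iff.mp hi₀))
            rw [hz]
            ring
          · have h1 : 0 < multiOrder m := Nat.pos_of_ne_zero hm0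
            have hfac : (multiOrder m : ℝ) * (((multiOrder m - 1).factorial : ℝ))
                = ((multiOrder m).factorial : ℝ) := by
              rw [← Nat.cast_mul, Nat.mul_factorial_pred hm0]
            calc (multiOrder m : ℝ) * (c ^ multiOrder ν * B
                  * (((multiOrder m - 1).factorial : ℝ)) * multiPow Υ m
                  * ∏ i ∈ ν.support, stirlingS2 (ν i) (m i))
                = ((multiOrder m : ℝ) * (((multiOrder m - 1).factorial : ℝ)))
                  * (c ^ multiOrder ν * B * multiPow Υ m
                  * ∏ i ∈ ν.support, stirlingS2 (ν i) (m i)) := by ring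
              _ = _ := by rw [hfac]; ring
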